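/- Let N ≥ 2, let θ : {1,…,N} → [−π,π) be a configuration on the ring, let η ∈ ℝ^{N+1} be a lift of θ, and fix k ∈ {1,…,N}. Let θ' be obtained from θ by a midpoint update at edge (k,k+1) (assume δ(k) ≠ −π, so the update is deterministic). Then there exists a unique lift η' of θ' satisfying η'(k) = η'(k+1) = (η(k) + η(k+1))/2 (with the index k+1 read as N+1 when k = N), and η'(i+1) − η'(i) = δ'(i) for all i, where δ' are the wrapped increments of θ'. -/
import Mathlib


open Real

/-- The wrap operator `wrap_π(a) = a - 2π⌊(a+π)/(2π)⌋`, taking values in `[-π, π)`. -/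
noncomputable def wrapPi (a : ℝ) : ℝ := a - 2 * π * ⌊(a + π) / (2 * π)⌋

/-- Congruence modulo `2π`. -/
def CongTwoPi (a b : ℝ) : Prop := ∃ m : ℤ, a - b = 2 * π * m

lemma congTwoPi_refl (a : ℝ) : CongTwoPi a a := ⟨0, by simp⟩

lemma congTwoPi_symm {a b : ℝ} (h : CongTwoPi a b) : CongTwoPi b a := by
  obtain ⟨m, hm⟩ := h
  exact ⟨-m, by push_cast; linarith⟩

lemma congTwoPi_trans {a b c : ℝ} (h1 : CongTwoPi a b) (h2 : CongTwoPi b c) :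
    CongTwoPi a c := by
  obtain ⟨m, hm⟩ := h1
  obtain ⟨n, hn⟩ := h2
  exact ⟨m + n, by push_cast; linarith⟩

lemma congTwoPi_add {a b c d : ℝ} (h1 : CongTwoPi a b) (h2 : CongTwoPi c d) :
    CongTwoPi (a + c) (b + d) := by
  obtain ⟨m, hm⟩ := h1
  obtain ⟨n, hn⟩ := h2
  exact ⟨m + n, by push_cast; linarith⟩

lemma congTwoPi_sub {a b c d : ℝ} (h1 : CongTwoPi a b) (h2 : CongTwoPi c d) :
    CongTwoPi (a - c) (b - d) := by
  obtain ⟨m, hm⟩ := h1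
  obtain ⟨n, hn⟩ := h2
  exact ⟨m - n, by push_cast; linarith⟩

lemma congTwoPi_wrapPi (a : ℝ) : CongTwoPi a (wrapPi a) :=
  ⟨⌊(a + π) / (2 * π)⌋, by unfold wrapPi; ring⟩

lemma wrapPi_add_int (a : ℝ) (m : ℤ) : wrapPi (a + 2 * π * m) = wrapPi a := by
  have hπ : (0:ℝ) < 2 * π := by positivity
  unfold wrapPi
  have : (a + 2 * π * m + π) / (2 * π) = (a + π) / (2 * π) + m := by
    field_simp; ring
  rw [this, Int.floor_add_intCast]
  push_cast
  ring

lemma wrapPi_congr {a b : ℝ} (h : CongTwoPi a b) : wrapPi a = wrapPi b := by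
  obtain ⟨m, hm⟩ := h
  have : a = b + 2 * π * m := by linarith
  rw [this, wrapPi_add_int]

lemma wrapPi_mem_Ico (a : ℝ) : wrapPi a ∈ Set.Ico (-π) π := by
  have hπ : (0:ℝ) < 2 * π := by positivity
  have h1 := Int.floor_le ((a + π) / (2 * π))
  have h2 := Int.lt_floor_add_one ((a + π) / (2 * π))
  rw [le_div_iff₀ hπ] at h1
  rw [div_lt_iff₀ hπ] at h2
  constructor
  · unfold wrapPi; nlinarith
  · unfold wrapPi; nlinarith

lemma wrapPi_eq_self {a : ℝ} (h : a ∈ Set.Ico (-π) π) : wrapPi a = a := by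
  have hπ : (0:ℝ) < 2 * π := by positivity
  have h0 : ⌊(a + π) / (2 * π)⌋ = 0 := by
    rw [Int.floor_eq_zero_iff]
    constructor
    · rw [le_div_iff₀ hπ]; simp; linarith [h.1]
    · rw [div_lt_one hπ]; linarith [h.2]
  unfold wrapPi
  rw [h0]
  simp

lemma wrapPi_eq_of_cong {a b : ℝ} (hb : b ∈ Set.Ico (-π) π) (h : CongTwoPi a b) :
    wrapPi a = b := by
  rw [wrapPi_congr h, wrapPi_eq_self hb]

/-- Propagation of a relation along a chain with matching increments. -/
lemma prop_rel (r : ℝ → ℝ → Prop)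
    (hfwd : ∀ a b c d : ℝ, r a b → r (c - a) (d - b) → r c d)
    (hbwd : ∀ a b c d : ℝ, r c d → r (c - a) (d - b) → r a b)
    (N k : ℕ) (hk1 : 1 ≤ k) (hkN : k ≤ N) (f g : ℕ → ℝ)
    (h0 : r (f k) (g k))
    (hd : ∀ i, 1 ≤ i → i ≤ N → r (f (i+1) - f i) (g (i+1) - g i)) :
    ∀ i, 1 ≤ i → i ≤ N + 1 → r (f i) (g i) := by
  have up : ∀ i, k ≤ i → i ≤ N + 1 → r (f i) (g i) := by
    intro i hki
    induction i, hki using Nat.le_induction with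
    | base => intro _; exact h0
    | succ n hn ih =>
      intro hn1
      have h1 : 1 ≤ n := le_trans hk1 hn
      have h2 : n ≤ N := by omega
      exact hfwd _ _ _ _ (ih (by omega)) (hd n h1 h2)
  have dn : ∀ t, t ≤ k - 1 → r (f (k - t)) (g (k - t)) := by
    intro t
    induction t with
    | zero => intro _; simpa using h0
    | succ s ih =>
      intro hs
      have hi1 : 1 ≤ k - (s + 1) := by omega
      have hiN : k - (s + 1) ≤ N := by omega
      have heq : k - (s + 1) + 1 = k - s := by omega
      have hprev := ih (by omega)
      rw [← heq] at hprev
      exact hbwd _ _ _ _ hprev (hd _ hi1 hiN)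
  intro i hi1 hi2
  rcases le_or_gt k i with h | h
  · exact up i h hi2
  · have : i = k - (k - i) := by omega
    rw [this]
    exact dn (k - i) (by omega)

/-- Existence and uniqueness of the lift of a configuration obtained by a
midpoint update.  If `η` is a lift of `θ` and `θ'` is obtained from `θ` by a midpoint
update at edge `(k,k+1)` (with `δ(k) ≠ -π`), then there is a unique lift `η'` of `θ'`
with `η'(k) = η'(k+1) = (η(k)+η(k+1))/2` (index `k+1` read as `N+1` when `k = N`) whose
increments are the wrapped increments `δ'` of `θ'`. -/
theorem lift_of_midpoint_update_exists_unique
    (N : ℕ) [NeZero N] (hN : 2 ≤ N)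
    (θ : ZMod N → ℝ) (hθ : ∀ i, θ i ∈ Set.Ico (-π) π)
    (η : ℕ → ℝ)
    (hinc : ∀ i : ℕ, 1 ≤ i → i ≤ N →
      η (i + 1) - η i = wrapPi (θ ((i : ZMod N) + 1) - θ (i : ZMod N)))
    (hanchor : wrapPi (η 1) = θ 1)
    (k : ℕ) (hk1 : 1 ≤ k) (hkN : k ≤ N)
    (hδk : wrapPi (θ ((k : ZMod N) + 1) - θ (k : ZMod N)) ≠ -π)
    (θ' : ZMod N → ℝ)
    (hθ' : θ' = fun i =>
      if i = (k : ZMod N) then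
        wrapPi (θ (k : ZMod N) + wrapPi (θ ((k : ZMod N) + 1) - θ (k : ZMod N)) / 2)
      else if i = (k : ZMod N) + 1 then
        wrapPi (θ ((k : ZMod N) + 1) - wrapPi (θ ((k : ZMod N) + 1) - θ (k : ZMod N)) / 2)
      else θ i) :
    ∃ η' : ℕ → ℝ,
      (η' k = (η k + η (k + 1)) / 2 ∧
       η' (k + 1) = (η k + η (k + 1)) / 2 ∧
       (∀ i : ℕ, 1 ≤ i → i ≤ N →
         η' (i + 1) - η' i = wrapPi (θ' ((i : ZMod N) + 1) - θ' (i : ZMod N))) ∧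
       wrapPi (η' 1) = θ' 1) ∧
      (∀ η'' : ℕ → ℝ,
        (η'' k = (η k + η (k + 1)) / 2 ∧
         η'' (k + 1) = (η k + η (k + 1)) / 2 ∧
         (∀ i : ℕ, 1 ≤ i → i ≤ N →
           η'' (i + 1) - η'' i = wrapPi (θ' ((i : ZMod N) + 1) - θ' (i : ZMod N))) ∧
         wrapPi (η'' 1) = θ' 1) →
        ∀ i : ℕ, 1 ≤ i → i ≤ N + 1 → η'' i = η' i) := by
  haveI : Fact (1 < N) := ⟨by omega⟩
  set K : ZMod N := ((k : ℕ) : ZMod N) with hK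
  set δ : ℝ := wrapPi (θ (K + 1) - θ K) with hδ
  set m : ℝ := (η k + η (k + 1)) / 2 with hm
  set d : ℕ → ℝ := fun i => wrapPi (θ' ((i : ZMod N) + 1) - θ' (i : ZMod N)) with hd
  -- θ' values are in [-π, π)
  have hθ'mem : ∀ i, θ' i ∈ Set.Ico (-π) π := by
    intro i
    rw [hθ']
    dsimp only
    split_ifs
    · exact wrapPi_mem_Ico _
    · exact wrapPi_mem_Ico _
    · exact hθ i
  have h1ne : K + 1 ≠ K := by
    intro h
    have : (1 : ZMod N) = 0 := by
      have := congrArg (· - K) h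
      simpa using this
    exact one_ne_zero this
  have hθ'k : θ' K = wrapPi (θ K + δ / 2) := by rw [hθ']; simp
  have hθ'k1 : θ' (K + 1) = wrapPi (θ (K + 1) - δ / 2) := by
    rw [hθ']
    simp [h1ne]
  -- the increment at edge k is zero
  have hdk : d k = 0 := by
    have hcong : CongTwoPi (θ' (K + 1) - θ' K) 0 := by
      have c1 : CongTwoPi (θ' (K + 1)) (θ (K + 1) - δ / 2) := by
        rw [hθ'k1]; exact congTwoPi_symm (congTwoPi_wrapPi _)
      have c2 : CongTwoPi (θ' K) (θ K + δ / 2) := by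
        rw [hθ'k]; exact congTwoPi_symm (congTwoPi_wrapPi _)
      have c3 : CongTwoPi (θ (K + 1) - θ K) δ := congTwoPi_wrapPi _
      have c4 := congTwoPi_sub c1 c2
      have : (θ (K + 1) - δ / 2) - (θ K + δ / 2) = (θ (K + 1) - θ K) - δ := by ring
      rw [this] at c4
      have c5 : CongTwoPi ((θ (K + 1) - θ K) - δ) 0 := by
        obtain ⟨n, hn⟩ := c3
        exact ⟨n, by linarith⟩
      exact congTwoPi_trans c4 c5
    have h0 : (0:ℝ) ∈ Set.Ico (-π) π := ⟨by linarith [pi_pos], pi_pos⟩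
    simpa [hd, hK] using wrapPi_eq_of_cong h0 hcong
  -- construction of η'
  set η' : ℕ → ℝ := fun i => m + ((∑ j ∈ Finset.range i, d j) - ∑ j ∈ Finset.range k, d j)
    with hη'
  have hη'inc : ∀ i : ℕ, η' (i + 1) - η' i = d i := by
    intro i
    simp [hη', Finset.sum_range_succ]
  have hη'k : η' k = m := by simp [hη']
  have hη'k1 : η' (k + 1) = m := by
    have := hη'inc k
    rw [hdk] at this
    linarith [hη'k]
  -- congruence of η with θ along the chain
  have hEq : ∀ a b c d : ℝ, a = b → (c - a = d - b) → c = d := by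
    intro a b c d h1 h2; linarith
  have hEq' : ∀ a b c d : ℝ, c = d → (c - a = d - b) → a = b := by
    intro a b c d h1 h2; linarith
  have hCfwd : ∀ a b c d : ℝ, CongTwoPi a b → CongTwoPi (c - a) (d - b) → CongTwoPi c d := by
    intro a b c d h1 h2
    have := congTwoPi_add h1 h2
    simpa using this
  have hCbwd : ∀ a b c d : ℝ, CongTwoPi c d → CongTwoPi (c - a) (d - b) → CongTwoPi a b := by
    intro a b c d h1 h2
    have := congTwoPi_sub h1 h2
    simpa using this
  have hcast : ∀ i : ℕ, (((i + 1 : ℕ)) : ZMod N) = ((i : ZMod N) + 1) := by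
    intro i; push_cast; ring
  have hηθ : ∀ i : ℕ, 1 ≤ i → i ≤ N + 1 → CongTwoPi (η i) (θ (i : ZMod N)) := by
    apply prop_rel CongTwoPi hCfwd hCbwd N 1 le_rfl (by omega)
    · rw [Nat.cast_one]
      exact ⟨⌊(η 1 + π) / (2 * π)⌋, by
        rw [← hanchor]; unfold wrapPi; push_cast; ring⟩
    · intro i hi1 hi2
      rw [hcast i, hinc i hi1 hi2]
      exact congTwoPi_symm (congTwoPi_wrapPi _)
  -- base congruence at k for η'
  have hbase : CongTwoPi (η' k) (θ' K) := by
    rw [hη'k]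
    have hδeq : η (k + 1) - η k = δ := hinc k hk1 hkN
    have hmk : m = η k + δ / 2 := by rw [hm]; linarith
    have c1 : CongTwoPi (η k) (θ K) := hηθ k hk1 (by omega)
    have c2 : CongTwoPi m (θ K + δ / 2) := by
      rw [hmk]
      exact congTwoPi_add c1 (congTwoPi_refl _)
    have c3 : CongTwoPi (θ K + δ / 2) (θ' K) := by
      rw [hθ'k]; exact congTwoPi_wrapPi _
    exact congTwoPi_trans c2 c3
  -- congruence of η' with θ' along the chain
  have hη'θ' : ∀ i : ℕ, 1 ≤ i → i ≤ N + 1 → CongTwoPi (η' i) (θ' (i : ZMod N)) := by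
    apply prop_rel CongTwoPi hCfwd hCbwd N k hk1 hkN _ _ hbase
    intro i hi1 hi2
    rw [hcast i, hη'inc i]
    simp only [hd]
    exact congTwoPi_symm (congTwoPi_wrapPi _)
  have hη'anchor : wrapPi (η' 1) = θ' 1 := by
    have h1 := hη'θ' 1 le_rfl (by omega)
    rw [Nat.cast_one] at h1
    exact wrapPi_eq_of_cong (hθ'mem 1) h1
  refine ⟨η', ⟨hη'k, hη'k1, fun i hi1 hi2 => hη'inc i, hη'anchor⟩, ?_⟩
  -- uniqueness
  rintro η'' ⟨h''k, _, h''inc, _⟩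
  apply prop_rel Eq hEq hEq' N k hk1 hkN η'' η'
  · rw [h''k, hη'k]
  · intro i hi1 hi2
    rw [h''inc i hi1 hi2, hη'inc i]
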